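/- Let w : ℝ² → ℂ be twice continuously differentiable, and let φ be holomorphic on an open set containing the image of w. Define w_φ(t, x) = φ(w(t, x)). Then Im[Q[w_φ]](t,x) = |φ′(w(t,x))|⁴ · Im[Q[w]](t,x) at every point, where Q is the quartic second-order operator defined below. -/

import Mathlib

private lemma chainR (g : ℝ → ℂ) (x : ℝ) (g' : ℂ) (f : ℂ → ℂ) (A : ℂ)
    (hg : HasDerivAt g g' x) (hf : HasDerivAt f A (g x)) :
    HasDerivAt (fun y => f (g y)) (A * g') x := by
  have := (hf.hasFDerivAt.restrictScalars ℝ).comp_hasDerivAt x hg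
  simpa [mul_comm, Function.comp_def] using this

private lemma keyalg (A B wx wt wxx wtt wxt : ℂ) :
    (A*wx * (starRingEnd ℂ (A*wx))^2 * (B*wt*wt + A*wtt) +
      (A*wx * starRingEnd ℂ (A*wx) * (A*wt) + (A*wx)^2 * starRingEnd ℂ (A*wt)) * starRingEnd ℂ (B*wx*wt + A*wxt) +
      starRingEnd ℂ (A*wx) * (A*wt) * starRingEnd ℂ (A*wt) * (B*wx*wx + A*wxx)).im =
    ‖A‖ ^ 4 * (wx * (starRingEnd ℂ wx)^2 * wtt +
      (wx * starRingEnd ℂ wx * wt + wx^2 * starRingEnd ℂ wt) * starRingEnd ℂ wxt +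
      starRingEnd ℂ wx * wt * starRingEnd ℂ wt * wxx).im := by
  set c := starRingEnd ℂ
  set R : ℂ := A * c A ^ 2 * B * wx * c wx * wt * (c wx * wt + wx * c wt) with hR
  have h1 : (A*wx * (c (A*wx))^2 * (B*wt*wt + A*wtt) +
      (A*wx * c (A*wx) * (A*wt) + (A*wx)^2 * c (A*wt)) * c (B*wx*wt + A*wxt) +
      c (A*wx) * (A*wt) * c (A*wt) * (B*wx*wx + A*wxx)) =
      (A * c A)^2 * (wx * (c wx)^2 * wtt +
      (wx * c wx * wt + wx^2 * c wt) * c wxt +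
      c wx * wt * c wt * wxx) + (R + c R) := by
    simp only [c, map_mul, map_add, map_pow, hR, Complex.conj_conj]
    ring
  rw [h1, Complex.add_im]
  have h2 : (R + c R).im = 0 := by simp [c, Complex.add_conj]
  rw [h2, add_zero]
  have h3 : (A * c A) ^ 2 = ((‖A‖ ^ 4 : ℝ) : ℂ) := by
    rw [Complex.mul_conj, ← Complex.sq_norm]
    push_cast
    ring
  rw [h3]
  simp [Complex.mul_im, ← Complex.ofReal_pow]


/-- The quartic second-order operator
Q[w] = wₓ·w̄ₓ²·wₜₜ + (wₓ·w̄ₓ·wₜ + wₓ²·w̄ₜ)·w̄ₓₜ + w̄ₓ·wₜ·w̄ₜ·wₓₓ. -/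
noncomputable def Qop (w : ℝ → ℝ → ℂ) (t x : ℝ) : ℂ :=
  let wx := deriv (fun y => w t y) x
  let wt := deriv (fun s => w s x) t
  let wxx := deriv (fun y => deriv (fun y' => w t y') y) x
  let wtt := deriv (fun s => deriv (fun s' => w s' x) s) t
  let wxt := deriv (fun y => deriv (fun s => w s y) t) x
  wx * (starRingEnd ℂ wx) ^ 2 * wtt +
    (wx * starRingEnd ℂ wx * wt + wx ^ 2 * starRingEnd ℂ wt) * starRingEnd ℂ wxt +
    starRingEnd ℂ wx * wt * starRingEnd ℂ wt * wxx


theorem stmt13 (w : ℝ → ℝ → ℂ) (hw : ContDiff ℝ 2 fun p : ℝ × ℝ => w p.1 p.2)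
    (V : Set ℂ) (hV : IsOpen V) (φ : ℂ → ℂ) (hφ : DifferentiableOn ℂ φ V)
    (hrange : ∀ t x : ℝ, w t x ∈ V) :
    ∀ t x : ℝ,
      (Qop (fun t' x' => φ (w t' x')) t x).im =
        ‖deriv φ (w t x)‖ ^ 4 * (Qop w t x).im := by
  intro t x
  set F : ℝ × ℝ → ℂ := fun p => w p.1 p.2 with hFdef
  have hF1 : Differentiable ℝ F := hw.differentiable (by norm_num)
  have hG : ContDiff ℝ 1 (fderiv ℝ F) := hw.fderiv_right (by norm_num)
  have hGd : Differentiable ℝ (fderiv ℝ F) := hG.differentiable one_ne_zero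
  -- first partials
  have hwx : ∀ (t y : ℝ), HasDerivAt (fun y' => w t y') (fderiv ℝ F (t, y) (0, 1)) y :=
    fun t y => (hF1 (t, y)).hasFDerivAt.comp_hasDerivAt y
      (HasDerivAt.prodMk (hasDerivAt_const _ _) (hasDerivAt_id _))
  have hwt : ∀ (s y : ℝ), HasDerivAt (fun s' => w s' y) (fderiv ℝ F (s, y) (1, 0)) s :=
    fun s y => by
      have := (hF1 (s, y)).hasFDerivAt.comp_hasDerivAt s
        (HasDerivAt.prodMk (hasDerivAt_id s) (hasDerivAt_const s y))
      exact this
  -- second partials of the fderiv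
  have hGx : ∀ (v : ℝ × ℝ), HasDerivAt (fun y => fderiv ℝ F (t, y) v)
      (fderiv ℝ (fderiv ℝ F) (t, x) (0, 1) v) x := by
    intro v
    have h1 : HasDerivAt (fun y => fderiv ℝ F (t, y)) (fderiv ℝ (fderiv ℝ F) (t, x) (0, 1)) x :=
      (hGd (t, x)).hasFDerivAt.comp_hasDerivAt x (HasDerivAt.prodMk (hasDerivAt_const _ _) (hasDerivAt_id _))
    simpa using h1.clm_apply (hasDerivAt_const x v)
  have hGt : ∀ (v : ℝ × ℝ), HasDerivAt (fun s => fderiv ℝ F (s, x) v)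
      (fderiv ℝ (fderiv ℝ F) (t, x) (1, 0) v) t := by
    intro v
    have h1 : HasDerivAt (fun s => fderiv ℝ F (s, x)) (fderiv ℝ (fderiv ℝ F) (t, x) (1, 0)) t :=
      (hGd (t, x)).hasFDerivAt.comp_hasDerivAt t (HasDerivAt.prodMk (hasDerivAt_id _) (hasDerivAt_const _ _))
    simpa using h1.clm_apply (hasDerivAt_const t v)
  -- analyticity of φ
  have hφa : AnalyticOnNhd ℂ φ V := hφ.analyticOnNhd hV
  have hφ' : ∀ u ∈ V, HasDerivAt φ (deriv φ u) u :=
    fun u hu => ((hφa u hu).differentiableAt).hasDerivAt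
  have hφ'' : ∀ u ∈ V, HasDerivAt (deriv φ) (deriv (deriv φ) u) u :=
    fun u hu => ((hφa.deriv u hu).differentiableAt).hasDerivAt
  set A := deriv φ (w t x) with hA
  set B := deriv (deriv φ) (w t x) with hB
  set wx := fderiv ℝ F (t, x) (0, 1) with hwxd
  set wt := fderiv ℝ F (t, x) (1, 0) with hwtd
  set Dxx := fderiv ℝ (fderiv ℝ F) (t, x) (0, 1) (0, 1) with hDxx
  set Dtt := fderiv ℝ (fderiv ℝ F) (t, x) (1, 0) (1, 0) with hDtt
  set Dxt := fderiv ℝ (fderiv ℝ F) (t, x) (0, 1) (1, 0) with hDxt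
  -- derivatives of w
  have e1 : deriv (fun y => w t y) x = wx := (hwx t x).deriv
  have e2 : deriv (fun s => w s x) t = wt := (hwt t x).deriv
  have e3 : deriv (fun y => deriv (fun y' => w t y') y) x = Dxx := by
    have h : (fun y => deriv (fun y' => w t y') y) = fun y => fderiv ℝ F (t, y) (0, 1) :=
      funext fun y => (hwx t y).deriv
    rw [h]; exact (hGx (0, 1)).deriv
  have e4 : deriv (fun s => deriv (fun s' => w s' x) s) t = Dtt := by
    have h : (fun s => deriv (fun s' => w s' x) s) = fun s => fderiv ℝ F (s, x) (1, 0) :=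
      funext fun s => (hwt s x).deriv
    rw [h]; exact (hGt (1, 0)).deriv
  have e5 : deriv (fun y => deriv (fun s => w s y) t) x = Dxt := by
    have h : (fun y => deriv (fun s => w s y) t) = fun y => fderiv ℝ F (t, y) (1, 0) :=
      funext fun y => (hwt t y).deriv
    rw [h]; exact (hGx (1, 0)).deriv
  -- derivatives of φ ∘ w
  have hvx : ∀ (t y : ℝ), HasDerivAt (fun y' => φ (w t y'))
      (deriv φ (w t y) * fderiv ℝ F (t, y) (0, 1)) y :=
    fun t y => chainR _ _ _ _ _ (hwx t y) (hφ' _ (hrange t y))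
  have hvt : ∀ (s y : ℝ), HasDerivAt (fun s' => φ (w s' y))
      (deriv φ (w s y) * fderiv ℝ F (s, y) (1, 0)) s :=
    fun s y => chainR _ _ _ _ _ (hwt s y) (hφ' _ (hrange s y))
  have hDφx : HasDerivAt (fun y => deriv φ (w t y)) (B * wx) x :=
    chainR _ _ _ _ _ (hwx t x) (hφ'' _ (hrange t x))
  have hDφt : HasDerivAt (fun s => deriv φ (w s x)) (B * wt) t :=
    chainR _ _ _ _ _ (hwt t x) (hφ'' _ (hrange t x))
  have f1 : deriv (fun y => φ (w t y)) x = A * wx := (hvx t x).deriv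
  have f2 : deriv (fun s => φ (w s x)) t = A * wt := (hvt t x).deriv
  have f3 : deriv (fun y => deriv (fun y' => φ (w t y')) y) x = B * wx * wx + A * Dxx := by
    have h : (fun y => deriv (fun y' => φ (w t y')) y)
        = fun y => deriv φ (w t y) * fderiv ℝ F (t, y) (0, 1) :=
      funext fun y => (hvx t y).deriv
    rw [h]
    exact (hDφx.mul (hGx (0, 1))).deriv
  have f4 : deriv (fun s => deriv (fun s' => φ (w s' x)) s) t = B * wt * wt + A * Dtt := by
    have h : (fun s => deriv (fun s' => φ (w s' x)) s)
        = fun s => deriv φ (w s x) * fderiv ℝ F (s, x) (1, 0) :=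
      funext fun s => (hvt s x).deriv
    rw [h]
    exact (hDφt.mul (hGt (1, 0))).deriv
  have f5 : deriv (fun y => deriv (fun s => φ (w s y)) t) x = B * wx * wt + A * Dxt := by
    have h : (fun y => deriv (fun s => φ (w s y)) t)
        = fun y => deriv φ (w t y) * fderiv ℝ F (t, y) (1, 0) :=
      funext fun y => (hvt t y).deriv
    rw [h]
    exact (hDφx.mul (hGx (1, 0))).deriv
  simp only [Qop]
  rw [e1, e2, e3, e4, e5, f1, f2, f3, f4, f5]
  exact keyalg A B wx wt Dxx Dtt Dxt
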